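/- Let h : Q → P be an injective, integral homomorphism of fine, sharp additive commutative monoids, without nilpotents, with P saturated, and suppose the quotient group P^gp / Q^gp is infinite cyclic (isomorphic to ℤ). Then the quotient monoid P/Q is saturated; in fact P/Q is isomorphic as a monoid to the trivial monoid 0, to ℕ, or to ℤ. -/

import Mathlib

/-- A (additive commutative) monoid is sharp if `x + y = 0` implies `x = 0`. -/
def Sharp (M : Type*) [AddCommMonoid M] : Prop :=
  ∀ x y : M, x + y = 0 → x = 0

/-- A monoid is cancellative if `a + c = b + c` implies `a = b`. -/
def Cancellative (M : Type*) [AddCommMonoid M] : Prop :=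
  ∀ a b c : M, a + c = b + c → a = b

/-- A monoid homomorphism `h : Q →+ P` is integral if whenever
`p1 + h q1 = p2 + h q2` there are `q3, q4, p` with `p1 = p + h q4`,
`p2 = p + h q3` and `q1 + q4 = q2 + q3`. -/
def IntegralHom {Q P : Type*} [AddCommMonoid Q] [AddCommMonoid P] (h : Q →+ P) : Prop :=
  ∀ (q1 q2 : Q) (p1 p2 : P), p1 + h q1 = p2 + h q2 →
    ∃ (q3 q4 : Q) (p : P), p1 = p + h q4 ∧ p2 = p + h q3 ∧ q1 + q4 = q2 + q3

/-- An element `p` of `P` is `Q`-primitive (relative to `h : Q →+ P`) if whenever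
`p = p' + h q` one has `q = 0`. -/
def QPrimitive {Q P : Type*} [AddCommMonoid Q] [AddCommMonoid P] (h : Q →+ P) (p : P) : Prop :=
  ∀ (p' : P) (q : Q), p = p' + h q → q = 0

/-- Membership in the ideal `I_Q = {h q + p : q ∈ Q, q ≠ 0, p ∈ P}`. -/
def MemIQ {Q P : Type*} [AddCommMonoid Q] [AddCommMonoid P] (h : Q →+ P) (p : P) : Prop :=
  ∃ q : Q, q ≠ 0 ∧ ∃ p' : P, p = h q + p'

/-- `h` is without nilpotents if `n • p ∈ I_Q` for some `n ≥ 1` implies `p ∈ I_Q`. -/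
def WithoutNilpotents {Q P : Type*} [AddCommMonoid Q] [AddCommMonoid P] (h : Q →+ P) : Prop :=
  ∀ (p : P) (n : ℕ), 1 ≤ n → MemIQ h (n • p) → MemIQ h p

/-- The congruence on `P` identifying `p ∼ p'` iff `p + h q = p' + h q'` for some
`q, q' ∈ Q`; the quotient monoid `P/Q` is its quotient. -/
def quotCon {Q P : Type*} [AddCommMonoid Q] [AddCommMonoid P] (h : Q →+ P) : AddCon P where
  r p p' := ∃ q q' : Q, p + h q = p' + h q'
  iseqv := by
    constructor
    · exact fun p => ⟨0, 0, rfl⟩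
    · rintro p p' ⟨q, q', e⟩; exact ⟨q', q, e.symm⟩
    · rintro p p' p'' ⟨q, q', e1⟩ ⟨s, s', e2⟩
      refine ⟨q + s, s' + q', ?_⟩
      calc p + h (q + s) = (p + h q) + h s := by rw [map_add, add_assoc]
        _ = (p' + h q') + h s := by rw [e1]
        _ = (p' + h s) + h q' := add_right_comm _ _ _
        _ = (p'' + h s') + h q' := by rw [e2]
        _ = p'' + h (s' + q') := by rw [map_add, add_assoc]
  add' := by
    rintro a b c d ⟨q1, q1', e1⟩ ⟨q2, q2', e2⟩
    refine ⟨q1 + q2, q1' + q2', ?_⟩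
    calc (a + c) + h (q1 + q2) = (a + h q1) + (c + h q2) := by
          rw [map_add]; exact add_add_add_comm _ _ _ _
      _ = (b + h q1') + (d + h q2') := by rw [e1, e2]
      _ = (b + d) + h (q1' + q2') := by rw [map_add]; exact (add_add_add_comm _ _ _ _).symm

/-- A monoid is saturated if it is cancellative and whenever `n • a = n • b + p`
for some `n ≥ 1` there is `p'` with `a = b + p'`. -/
def Saturated (M : Type*) [AddCommMonoid M] : Prop :=
  Cancellative M ∧ ∀ (a b p : M) (n : ℕ), 1 ≤ n → n • a = n • b + p → ∃ p' : M, a = b + p'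

/-- For an injective, integral homomorphism `h : Q →+ P` of fine, sharp monoids,
without nilpotents, with `P` saturated and `P^gp/Q^gp ≅ ℤ`, the quotient monoid `P/Q`
is saturated; in fact it is isomorphic to `0`, `ℕ` or `ℤ`.

The hypothesis `P^gp/Q^gp ≅ ℤ` is encoded elementwise by a homomorphism `φ : P →+ ℤ`
vanishing on `Q`, whose fibers are exactly the `Q`-congruence classes (so that the
induced map `P^gp/Q^gp → ℤ` is injective) and whose range generates `ℤ` as a group
(so that the induced map is surjective). -/
theorem quotient_saturated_of_cyclic {Q P : Type*} [AddCommMonoid Q] [AddCommMonoid P]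
    (hQsharp : Sharp Q) (hQcanc : Cancellative Q) (hQfg : AddMonoid.FG Q)
    (hPsharp : Sharp P) (hPcanc : Cancellative P) (hPfg : AddMonoid.FG P)
    (h : Q →+ P) (hinj : Function.Injective h) (hint : IntegralHom h)
    (hnil : WithoutNilpotents h) (hsat : Saturated P)
    (hcyc : ∃ φ : P →+ ℤ,
      (∀ q : Q, φ (h q) = 0) ∧
      (∀ p p' : P, φ p = φ p' → ∃ q q' : Q, p + h q = p' + h q') ∧
      AddSubgroup.closure (Set.range φ) = ⊤) :
    Saturated (quotCon h).Quotient ∧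
      (Subsingleton (quotCon h).Quotient ∨
        Nonempty ((quotCon h).Quotient ≃+ ℕ) ∨
        Nonempty ((quotCon h).Quotient ≃+ ℤ)) := by

  obtain ⟨φ, hφQ, hφfib, hφgen⟩ := hcyc
  -- φ kills the congruence
  have hker : quotCon h ≤ AddCon.ker φ := by
    rintro p p' ⟨q, q', e⟩
    show φ p = φ p'
    have := congrArg φ e
    simpa [hφQ] using this
  set ψ : (quotCon h).Quotient →+ ℤ := (quotCon h).lift φ hker with hψ
  have hψcoe : ∀ p : P, ψ ((p : (quotCon h).Quotient)) = φ p := fun p =>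
    AddCon.lift_coe hker p
  have hψinj : Function.Injective ψ := by
    intro a b hab
    obtain ⟨pa, rfl⟩ := AddCon.mk'_surjective a
    obtain ⟨pb, rfl⟩ := AddCon.mk'_surjective b
    have : φ pa = φ pb := by
      simpa [AddCon.mk', hψcoe] using hab
    obtain ⟨q, q', e⟩ := hφfib pa pb this
    exact AddCon.eq _ |>.mpr ⟨q, q', e⟩
  -- key saturation lemma in P
  have key : ∀ (pa pb r : P) (n : ℕ), 1 ≤ n →
      (quotCon h) (n • pa) (n • pb + r) →
      ∃ (t : P) (q : Q), pa + h q = pb + t := by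
    rintro pa pb r n hn ⟨q, q', e⟩
    obtain ⟨m, rfl⟩ : ∃ m, n = m + 1 := ⟨n - 1, by omega⟩
    have e2 : (m + 1) • (pa + h q) = (m + 1) • pb + (r + h q' + m • h q) := by
      have : (m + 1) • (pa + h q) = ((m + 1) • pa + h q) + m • h q := by
        rw [smul_add, succ_nsmul (h q) m]
        abel
      rw [this, e]
      abel
    obtain ⟨t, ht⟩ := hsat.2 (pa + h q) pb (r + h q' + m • h q) (m + 1) (by omega) e2
    exact ⟨t, q, ht⟩
  -- saturatedness of the quotient
  have hQcancQ : Cancellative (quotCon h).Quotient := by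
    intro a b c e
    apply hψinj
    have : ψ a + ψ c = ψ b + ψ c := by rw [← map_add, ← map_add, e]
    exact add_right_cancel this
  have hsatQ : Saturated (quotCon h).Quotient := by
    refine ⟨hQcancQ, ?_⟩
    intro a b p n hn e
    obtain ⟨pa, rfl⟩ := AddCon.mk'_surjective a
    obtain ⟨pb, rfl⟩ := AddCon.mk'_surjective b
    obtain ⟨r, rfl⟩ := AddCon.mk'_surjective p
    have e' : (quotCon h) (n • pa) (n • pb + r) := by
      rw [← AddCon.eq]
      exact e
    obtain ⟨t, q, ht⟩ := key pa pb r n hn e'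
    refine ⟨(t : (quotCon h).Quotient), ?_⟩
    show ((pa : (quotCon h).Quotient)) = ((pb : (quotCon h).Quotient)) + t
    rw [← AddCon.coe_add, AddCon.eq]
    exact ⟨q, 0, by simpa using ht⟩
  refine ⟨hsatQ, ?_⟩
  -- every integer is a difference of values of φ
  have hdiff : ∀ x : ℤ, ∃ a b : P, φ a - φ b = x := by
    intro x
    have hx : x ∈ AddSubgroup.closure (Set.range φ) := by rw [hφgen]; trivial
    induction hx using AddSubgroup.closure_induction with
    | mem y hy => obtain ⟨p, rfl⟩ := hy; exact ⟨p, 0, by simp⟩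
    | zero => exact ⟨0, 0, by simp⟩
    | add y z _ _ hy hz =>
        obtain ⟨a, b, rfl⟩ := hy; obtain ⟨c, d, rfl⟩ := hz
        exact ⟨a + c, b + d, by simp [map_add]; ring⟩
    | neg y _ hy =>
        obtain ⟨a, b, rfl⟩ := hy; exact ⟨b, a, by ring⟩
  -- image of φ is "saturated" in ℤ
  have hSsat : ∀ x : ℤ, ∀ (n : ℕ) (r : P), 1 ≤ n → (n : ℤ) * x = φ r →
      ∃ t : P, φ t = x := by
    intro x n r hn hx
    obtain ⟨a, b, hab⟩ := hdiff x
    have hval : φ (n • a) = φ (n • b + r) := by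
      rw [map_add, map_nsmul, map_nsmul, nsmul_eq_mul, nsmul_eq_mul, ← hx]
      have hab' : φ a = φ b + x := by omega
      rw [hab']; ring
    obtain ⟨q, q', e⟩ := hφfib _ _ hval
    obtain ⟨t, q0, ht⟩ := key a b r n hn ⟨q, q', e⟩
    refine ⟨t, ?_⟩
    have := congrArg φ ht
    simp only [map_add, hφQ] at this
    omega
  by_cases hA : ∃ p : P, 0 < φ p
  · obtain ⟨s, hs⟩ := hA
    have hone : ∃ e1 : P, φ e1 = 1 := by
      refine hSsat 1 (φ s).toNat s (by omega) ?_
      simp [Int.toNat_of_nonneg hs.le]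
    obtain ⟨e1, he1⟩ := hone
    have hval1 : ∀ k : ℕ, φ (k • e1) = (k : ℤ) := by
      intro k; rw [map_nsmul, nsmul_eq_mul, he1, mul_one]
    by_cases hB : ∃ p : P, φ p < 0
    · -- P/Q ≃ ℤ
      obtain ⟨s', hs'⟩ := hB
      have hmone : ∃ em : P, φ em = -1 := by
        refine hSsat (-1) (-φ s').toNat s' (by omega) ?_
        rw [Int.toNat_of_nonneg (by omega)]; ring
      obtain ⟨em, hem⟩ := hmone
      have hvalm : ∀ k : ℕ, φ (k • em) = -(k : ℤ) := by
        intro k; rw [map_nsmul, nsmul_eq_mul, hem]; ring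
      have hsurj : Function.Surjective ψ := by
        intro x
        rcases le_or_gt 0 x with hx | hx
        · exact ⟨((x.toNat • e1 : P) : (quotCon h).Quotient), by
            rw [hψcoe, hval1, Int.toNat_of_nonneg hx]⟩
        · exact ⟨(((-x).toNat • em : P) : (quotCon h).Quotient), by
            rw [hψcoe, hvalm, Int.toNat_of_nonneg (by omega)]; omega⟩
      exact Or.inr (Or.inr ⟨AddEquiv.ofBijective ψ ⟨hψinj, hsurj⟩⟩)
    · -- P/Q ≃ ℕ
      push_neg at hB
      have hnn : ∀ a : (quotCon h).Quotient, 0 ≤ ψ a := by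
        intro a; obtain ⟨pa, rfl⟩ := AddCon.mk'_surjective a
        simpa [AddCon.mk', hψcoe] using hB pa
      refine Or.inr (Or.inl ⟨AddEquiv.mk' (Equiv.ofBijective
        (fun a => (ψ a).toNat) ⟨?_, ?_⟩) ?_⟩)
      · intro a b hab
        apply hψinj
        have ha := hnn a; have hb := hnn b
        have h2 : (ψ a).toNat = (ψ b).toNat := hab
        omega
      · intro k
        exact ⟨((k • e1 : P) : (quotCon h).Quotient), by simp [hψcoe, hval1]⟩
      · intro a b
        show (ψ (a + b)).toNat = (ψ a).toNat + (ψ b).toNat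
        rw [map_add]
        rw [Int.toNat_add (hnn a) (hnn b)]
  · by_cases hB : ∃ p : P, φ p < 0
    · -- P/Q ≃ ℕ via negation
      push_neg at hA
      obtain ⟨s', hs'⟩ := hB
      have hmone : ∃ em : P, φ em = -1 := by
        refine hSsat (-1) (-φ s').toNat s' (by omega) ?_
        rw [Int.toNat_of_nonneg (by omega)]; ring
      obtain ⟨em, hem⟩ := hmone
      have hvalm : ∀ k : ℕ, φ (k • em) = -(k : ℤ) := by
        intro k; rw [map_nsmul, nsmul_eq_mul, hem]; ring
      have hnp : ∀ a : (quotCon h).Quotient, ψ a ≤ 0 := by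
        intro a; obtain ⟨pa, rfl⟩ := AddCon.mk'_surjective a
        simpa [AddCon.mk', hψcoe] using hA pa
      refine Or.inr (Or.inl ⟨AddEquiv.mk' (Equiv.ofBijective
        (fun a => (-ψ a).toNat) ⟨?_, ?_⟩) ?_⟩)
      · intro a b hab
        apply hψinj
        have ha := hnp a; have hb := hnp b
        have h2 : (-ψ a).toNat = (-ψ b).toNat := hab
        omega
      · intro k
        refine ⟨((k • em : P) : (quotCon h).Quotient), ?_⟩
        simp [hψcoe, hvalm]
      · intro a b
        show (-ψ (a + b)).toNat = (-ψ a).toNat + (-ψ b).toNat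
        rw [map_add, neg_add]
        rw [Int.toNat_add (by linarith [hnp a]) (by linarith [hnp b])]
    · -- trivial
      push_neg at hA hB
      refine Or.inl ⟨fun a b => hψinj ?_⟩
      obtain ⟨pa, rfl⟩ := AddCon.mk'_surjective a
      obtain ⟨pb, rfl⟩ := AddCon.mk'_surjective b
      have h1 := hA pa; have h2 := hB pa; have h3 := hA pb; have h4 := hB pb
      change ψ ((pa : (quotCon h).Quotient)) = ψ ((pb : (quotCon h).Quotient))
      rw [hψcoe, hψcoe]
      omega
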